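/- Let P and Q be 2 × 2 matrices with entries in the polynomial ring ℂ[x₁,…,xₙ] such that P·Q = Q·P. Then there exist polynomials a₀, a₁, b₀, b₁ ∈ ℂ[x₁,…,xₙ] and a 2 × 2 matrix Z over ℂ[x₁,…,xₙ] such that P = a₀·𝟙 + a₁·Z and Q = b₀·𝟙 + b₁·Z, where 𝟙 denotes the 2 × 2 identity matrix. -/

import Mathlib

open MvPolynomial

section helpers

variable {R : Type*} [CommMonoidWithZero R] [GCDMonoid R]

/-- Reduction by gcd: from `q•(d,e,f) = p•(a,b,c)` with `q ≠ 0`, extract a common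
vector `(a',b',c')` such that `(a,b,c) = q'•(a',b',c')` and `(d,e,f) = p'•(a',b',c')`. -/
theorem reduce_vectors (q p a b c d e f : R) (hq : q ≠ 0)
    (h1 : q * d = p * a) (h2 : q * e = p * b) (h3 : q * f = p * c) :
    ∃ p' q' a' b' c', a = q' * a' ∧ b = q' * b' ∧ c = q' * c' ∧
      d = p' * a' ∧ e = p' * b' ∧ f = p' * c' := by
  obtain ⟨q₁, p₁, hq₁, hp₁, hu⟩ := extract_gcd q p
  have hg0 : gcd q p ≠ 0 := fun h => hq (by rw [hq₁, h, zero_mul])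
  have hrel : IsRelPrime q₁ p₁ := gcd_isUnit_iff_isRelPrime.mp hu
  have cancel : ∀ x y : R, q * x = p * y → q₁ * x = p₁ * y := by
    intro x y hxy
    apply mul_left_cancel₀ hg0
    rw [← mul_assoc, ← mul_assoc, ← hq₁, ← hp₁, hxy]
  have h1' := cancel d a h1
  have h2' := cancel e b h2
  have h3' := cancel f c h3
  have hq₁0 : q₁ ≠ 0 := fun h => hq (by rw [hq₁, h, mul_zero])
  have hdvd : ∀ x y : R, q₁ * x = p₁ * y → q₁ ∣ y := by
    intro x y hxy
    exact hrel.dvd_of_dvd_mul_left ⟨x, hxy.symm⟩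
  obtain ⟨a', ha'⟩ := hdvd d a h1'
  obtain ⟨b', hb'⟩ := hdvd e b h2'
  obtain ⟨c', hc'⟩ := hdvd f c h3'
  refine ⟨p₁, q₁, a', b', c', ha', hb', hc', ?_, ?_, ?_⟩
  · apply mul_left_cancel₀ hq₁0
    rw [h1', ha']; exact mul_left_comm _ _ _
  · apply mul_left_cancel₀ hq₁0
    rw [h2', hb']; exact mul_left_comm _ _ _
  · apply mul_left_cancel₀ hq₁0
    rw [h3', hc']; exact mul_left_comm _ _ _

/-- Two vectors with all vanishing 2×2 minors are proportional to a common vector,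
provided the first is nonzero. -/
theorem key_vectors (a b c d e f : R)
    (h1 : a * e = b * d) (h2 : a * f = c * d) (h3 : b * f = c * e)
    (hne : ¬(a = 0 ∧ b = 0 ∧ c = 0)) :
    ∃ p' q' a' b' c', a = q' * a' ∧ b = q' * b' ∧ c = q' * c' ∧
      d = p' * a' ∧ e = p' * b' ∧ f = p' * c' := by
  by_cases ha : a ≠ 0
  · exact reduce_vectors a d a b c d e f ha (mul_comm a d) (h1.trans (mul_comm b d))
      (h2.trans (mul_comm c d))
  by_cases hb : b ≠ 0
  · exact reduce_vectors b e a b c d e f hb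
      (h1.symm.trans (mul_comm a e)) (mul_comm b e) (h3.trans (mul_comm c e))
  by_cases hc : c ≠ 0
  · exact reduce_vectors c f a b c d e f hc
      (h2.symm.trans (mul_comm a f)) (h3.symm.trans (mul_comm b f)) (mul_comm c f)
  · push_neg at ha hb hc
    exact absurd ⟨ha, hb, hc⟩ hne

end helpers

/-- Two commuting `2 × 2` matrices over the polynomial ring `ℂ[x₁,…,xₙ]` lie in a
commutative algebra generated over the scalar matrices by a single polynomial
matrix `Z`: if `P·Q = Q·P` then `P = a₀·𝟙 + a₁·Z` and `Q = b₀·𝟙 + b₁·Z` for some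
polynomials `a₀, a₁, b₀, b₁` and some polynomial matrix `Z`. -/
theorem commuting_two_by_two_polynomial_matrices (n : ℕ)
    (P Q : Matrix (Fin 2) (Fin 2) (MvPolynomial (Fin n) ℂ))
    (hcomm : P * Q = Q * P) :
    ∃ (a₀ a₁ b₀ b₁ : MvPolynomial (Fin n) ℂ)
      (Z : Matrix (Fin 2) (Fin 2) (MvPolynomial (Fin n) ℂ)),
      P = a₀ • (1 : Matrix (Fin 2) (Fin 2) (MvPolynomial (Fin n) ℂ)) + a₁ • Z ∧
      Q = b₀ • (1 : Matrix (Fin 2) (Fin 2) (MvPolynomial (Fin n) ℂ)) + b₁ • Z := by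
  classical
  letI : GCDMonoid (MvPolynomial (Fin n) ℂ) :=
    UniqueFactorizationMonoid.toGCDMonoid (MvPolynomial (Fin n) ℂ)
  set h : MvPolynomial (Fin n) ℂ := C (2⁻¹ : ℂ) with hh
  have h2 : (2 : MvPolynomial (Fin n) ℂ) * h = 1 := by
    rw [hh, show (2 : MvPolynomial (Fin n) ℂ) = C (2 : ℂ) from (map_ofNat C 2).symm,
      ← C_mul, ← C_1]
    norm_num
  set a₀ : MvPolynomial (Fin n) ℂ := h * (P 0 0 + P 1 1) with ha₀
  set b₀ : MvPolynomial (Fin n) ℂ := h * (Q 0 0 + Q 1 1) with hb₀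
  set P₀ : Matrix (Fin 2) (Fin 2) (MvPolynomial (Fin n) ℂ) := P - a₀ • 1 with hP₀
  set Q₀ : Matrix (Fin 2) (Fin 2) (MvPolynomial (Fin n) ℂ) := Q - b₀ • 1 with hQ₀
  have hPdecomp : P = a₀ • (1 : Matrix (Fin 2) (Fin 2) (MvPolynomial (Fin n) ℂ)) + P₀ := by
    rw [hP₀, add_sub_cancel]
  have hQdecomp : Q = b₀ • (1 : Matrix (Fin 2) (Fin 2) (MvPolynomial (Fin n) ℂ)) + Q₀ := by
    rw [hQ₀, add_sub_cancel]
  -- the traceless parts commute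
  have hc : P₀ * Q₀ = Q₀ * P₀ := by
    have hPQ : Commute P Q := hcomm
    have hc1 : Commute P Q₀ := hPQ.sub_right ((Commute.one_right P).smul_right b₀)
    have hc2 : Commute (a₀ • (1 : Matrix (Fin 2) (Fin 2) (MvPolynomial (Fin n) ℂ))) Q₀ :=
      (Commute.one_left Q₀).smul_left a₀
    exact (hc1.sub_left hc2).eq
  have e : ∀ i j, (P₀ * Q₀) i j = (Q₀ * P₀) i j := fun i j => by rw [hc]
  set a : MvPolynomial (Fin n) ℂ := P₀ 0 0 with ha
  set b : MvPolynomial (Fin n) ℂ := P₀ 0 1 with hb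
  set c : MvPolynomial (Fin n) ℂ := P₀ 1 0 with hcc
  set d : MvPolynomial (Fin n) ℂ := Q₀ 0 0 with hd
  set ee : MvPolynomial (Fin n) ℂ := Q₀ 0 1 with he
  set f : MvPolynomial (Fin n) ℂ := Q₀ 1 0 with hf
  have haP : P₀ 1 1 = -a := by
    rw [ha, hP₀]
    simp only [Matrix.sub_apply, Matrix.smul_apply, Matrix.one_apply_eq, smul_eq_mul, mul_one]
    rw [ha₀]
    linear_combination (-(P 0 0) - P 1 1) * h2
  have hdQ : Q₀ 1 1 = -d := by
    rw [hd, hQ₀]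
    simp only [Matrix.sub_apply, Matrix.smul_apply, Matrix.one_apply_eq, smul_eq_mul, mul_one]
    rw [hb₀]
    linear_combination (-(Q 0 0) - Q 1 1) * h2
  have two_ne : (2 : MvPolynomial (Fin n) ℂ) ≠ 0 := two_ne_zero
  have e00 := e 0 0
  have e01 := e 0 1
  have e10 := e 1 0
  simp only [Matrix.mul_apply, Fin.sum_univ_two, haP, hdQ, ← ha, ← hb, ← hcc, ← hd, ← he,
    ← hf] at e00 e01 e10
  have h1 : a * ee = b * d := by
    apply mul_left_cancel₀ two_ne
    linear_combination e01
  have h2' : a * f = c * d := by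
    apply mul_left_cancel₀ two_ne
    linear_combination -e10
  have h3 : b * f = c * ee := by
    linear_combination e00
  by_cases hzero : a = 0 ∧ b = 0 ∧ c = 0
  · -- P is scalar
    have hP0 : P₀ = 0 := by
      refine Matrix.ext fun i j => ?_
      fin_cases i <;> fin_cases j
      · exact hzero.1
      · exact hzero.2.1
      · exact hzero.2.2
      · show P₀ 1 1 = 0
        rw [haP, hzero.1, neg_zero]
    exact ⟨a₀, 0, b₀, 1, Q₀, by rw [hPdecomp, hP0, zero_smul], by rw [hQdecomp, one_smul]⟩
  · obtain ⟨p', q', a', b', c', e1, e2, e3, e4, e5, e6⟩ :=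
      key_vectors a b c d ee f h1 h2' h3 hzero
    refine ⟨a₀, q', b₀, p', Matrix.of ![![a', b'], ![c', -a']], ?_, ?_⟩
    · rw [hPdecomp]
      congr 1
      refine Matrix.ext fun i j => ?_
      fin_cases i <;> fin_cases j
      · show a = q' • Matrix.of ![![a', b'], ![c', -a']] 0 0; simpa using e1
      · show b = q' • Matrix.of ![![a', b'], ![c', -a']] 0 1; simpa using e2
      · show c = q' • Matrix.of ![![a', b'], ![c', -a']] 1 0; simpa using e3
      · show P₀ 1 1 = q' • Matrix.of ![![a', b'], ![c', -a']] 1 1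
        rw [haP, e1]; simp [mul_neg]
    · rw [hQdecomp]
      congr 1
      refine Matrix.ext fun i j => ?_
      fin_cases i <;> fin_cases j
      · show d = p' • Matrix.of ![![a', b'], ![c', -a']] 0 0; simpa using e4
      · show ee = p' • Matrix.of ![![a', b'], ![c', -a']] 0 1; simpa using e5
      · show f = p' • Matrix.of ![![a', b'], ![c', -a']] 1 0; simpa using e6
      · show Q₀ 1 1 = p' • Matrix.of ![![a', b'], ![c', -a']] 1 1
        rw [hdQ, e4]; simp [mul_neg]
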